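/- Let m ≥ 1 and let A, B, C, C' be m×m matrices over F₂ such that the digital nets generated by (A, B, C) and by (A, B, C') are both (0,m,3)-nets over F₂. Let a_i, b_i, c_i, c'_i denote the i-th rows of A, B, C, C' respectively, and for integers i, j ≥ 0 with i+j ≤ m−1 let V_{i,j} = span{a_1,…,a_i, b_1,…,b_{m−i−j−1}, c_1,…,c_j} and W_{i,j} = span{a_1,…,a_i, b_1,…,b_{m−i−j−1}, c'_1,…,c'_j}, as F₂-subspaces of F₂^m. Then V_{i,j} = W_{i,j} for all such i and j. -/

import Mathlib

open Matrix

/-- The vector of binary digits of `l` (least significant first). -/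
def digitsVec (m l : ℕ) : Fin m → ZMod 2 := fun k => if l.testBit k.val then 1 else 0

/-- The map φ sending a bit vector to a real number in [0,1). -/
noncomputable def phiMap (m : ℕ) (y : Fin m → ZMod 2) : ℝ :=
  ∑ k : Fin m, ((y k).val : ℝ) / 2 ^ (k.val + 1)

/-- The digital net (as a multiset of `2^m` points in `[0,1)^s`) generated by
matrices `C 0, …, C (s-1)`. -/
noncomputable def digitalNet (m s : ℕ) (C : Fin s → Matrix (Fin m) (Fin m) (ZMod 2)) :
    Multiset (Fin s → ℝ) :=
  (Multiset.range (2 ^ m)).map fun l => fun j => phiMap m ((C j).mulVec (digitsVec m l))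

open Classical in
/-- `P` is a `(t,m,s)`-net over `F₂`: every elementary interval of volume `2^{t-m}`
contains exactly `2^t` points of `P`, counted with multiplicity. -/
def IsNet (t m s : ℕ) (P : Multiset (Fin s → ℝ)) : Prop :=
  ∀ d : Fin s → ℕ, (∑ i, d i) = m - t →
    ∀ a : Fin s → ℕ, (∀ i, a i < 2 ^ d i) →
      (P.countP fun x => ∀ i,
        ((a i : ℝ) / 2 ^ d i ≤ x i ∧ x i < ((a i : ℝ) + 1) / 2 ^ d i)) = 2 ^ t

/-- The anti-diagonal matrix `J_m` over `F₂`. -/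
def Jmat (m : ℕ) : Matrix (Fin m) (Fin m) (ZMod 2) :=
  Matrix.of fun i j => if i.val + j.val = m - 1 then 1 else 0

/-- The upper-triangular Pascal matrix `P_m` over `F₂` (0-indexed entry `(i,j)` is
`binom(j,i) mod 2`). -/
def Pmat (m : ℕ) : Matrix (Fin m) (Fin m) (ZMod 2) :=
  Matrix.of fun i j => ((j.val.choose i.val : ℕ) : ZMod 2)

/-- A matrix is lower triangular. -/
def IsLowerTri {m : ℕ} (L : Matrix (Fin m) (Fin m) (ZMod 2)) : Prop :=
  ∀ i j : Fin m, i < j → L i j = 0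

/-- The set consisting of the first `n` rows of `M`. -/
def rowSet {m : ℕ} (M : Matrix (Fin m) (Fin m) (ZMod 2)) (n : ℕ) :
    Set (Fin m → ZMod 2) :=
  {x | ∃ r : Fin m, r.val < n ∧ x = M r}

/-- The subspace `V_{i,j}` spanned by the first `i` rows of `A`, the first
`m−i−j−1` rows of `B` and the first `j` rows of `C`. -/
def Vsub {m : ℕ} (A B C : Matrix (Fin m) (Fin m) (ZMod 2)) (i j : ℕ) :
    Submodule (ZMod 2) (Fin m → ZMod 2) :=
  Submodule.span (ZMod 2) (rowSet A i ∪ rowSet B (m - i - j - 1) ∪ rowSet C j)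

lemma geo_sum (d m : ℕ) (h : d ≤ m) :
    ∑ k ∈ Finset.Ico d m, ((1:ℝ)/2)^(k+1) = (1/2)^d - (1/2)^m := by
  induction m, h using Nat.le_induction with
  | base => simp
  | succ n hn ih =>
      rw [Finset.sum_Ico_succ_top hn, ih]
      ring

lemma phi_nonneg (m : ℕ) (y : Fin m → ZMod 2) : 0 ≤ phiMap m y := by
  apply Finset.sum_nonneg; intro k _; positivity

lemma phi_lt (m d : ℕ) (hd : d ≤ m) (y : Fin m → ZMod 2)
    (h0 : ∀ k : Fin m, k.val < d → y k = 0) : phiMap m y < 1 / 2^d := by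
  have hval : ∀ k : Fin m, ((y k).val : ℝ) ≤ 1 := by
    intro k
    have := ZMod.val_lt (y k)
    exact_mod_cast Nat.lt_succ_iff.mp (by simpa using this)
  have hle : phiMap m y ≤ ∑ k ∈ Finset.Ico d m, ((1:ℝ)/2)^(k+1) := by
    have h1 : phiMap m y ≤ ∑ k : Fin m, (if k.val < d then 0 else ((1:ℝ)/2)^(k.val+1)) := by
      apply Finset.sum_le_sum
      intro k _
      by_cases hk : k.val < d
      · simp [hk, h0 k hk]
      · simp only [hk, if_false, div_pow, one_pow]
        rw [div_le_div_iff_of_pos_right (by positivity)]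
        exact hval k
    have h2 : ∑ k : Fin m, (if k.val < d then 0 else ((1:ℝ)/2)^(k.val+1))
        = ∑ k ∈ Finset.Ico d m, ((1:ℝ)/2)^(k+1) := by
      rw [Fin.sum_univ_eq_sum_range (fun k => if k < d then 0 else ((1:ℝ)/2)^(k+1)) m]
      rw [← Finset.sum_filter_add_sum_filter_not (Finset.range m) (fun k => k < d)]
      have e1 : ∑ i ∈ (Finset.range m).filter (fun k => k < d), (if i < d then (0:ℝ) else (1/2)^(i+1)) = 0 := by
        apply Finset.sum_eq_zero; intro i hi; simp at hi; simp [hi.2]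
      have e2 : (Finset.range m).filter (fun k => ¬ k < d) = Finset.Ico d m := by
        ext i; simp [Finset.mem_Ico]; omega
      rw [e1, e2, zero_add]
      apply Finset.sum_congr rfl; intro i hi
      simp [Finset.mem_Ico] at hi
      simp [Nat.not_lt.mpr hi.1]
    exact h1.trans_eq h2
  have := geo_sum d m hd
  rw [this] at hle
  have hpos : (0:ℝ) < (1/2)^m := by positivity
  calc phiMap m y ≤ (1/2)^d - (1/2)^m := hle
    _ < (1/2)^d := by linarith
    _ = 1 / 2^d := by rw [div_pow, one_pow]

lemma digits_inj (m : ℕ) : Function.Injective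
    (fun l : Fin (2^m) => digitsVec m l.val) := by
  intro l1 l2 hE
  have hbit : ∀ k, l1.val.testBit k = l2.val.testBit k := by
    intro k
    by_cases hk : k < m
    · have := congrFun hE ⟨k, hk⟩
      simp only [digitsVec] at this
      by_cases h1 : l1.val.testBit k <;> by_cases h2 : l2.val.testBit k <;>
        simp [h1, h2] at this ⊢
    · rw [Nat.testBit_lt_two_pow, Nat.testBit_lt_two_pow]
      · exact lt_of_lt_of_le l2.isLt (Nat.pow_le_pow_right (by norm_num) (Nat.le_of_not_lt hk))
      · exact lt_of_lt_of_le l1.isLt (Nat.pow_le_pow_right (by norm_num) (Nat.le_of_not_lt hk))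
  exact Fin.ext (Nat.eq_of_testBit_eq hbit)

lemma digits_surj (m : ℕ) (v : Fin m → ZMod 2) :
    ∃ l : Fin (2^m), digitsVec m l.val = v := by
  have hcard : Fintype.card (Fin (2^m)) = Fintype.card (Fin m → ZMod 2) := by
    rw [Fintype.card_fin, Fintype.card_fun, ZMod.card, Fintype.card_fin]
  have hbij := (Fintype.bijective_iff_injective_and_card _).2 ⟨digits_inj m, hcard⟩
  exact hbij.2 v

/-- The stacked matrix. -/
def stackM {m : ℕ} (A B C : Matrix (Fin m) (Fin m) (ZMod 2)) (d1 d2 : ℕ) :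
    Matrix (Fin m) (Fin m) (ZMod 2) :=
  Matrix.of fun k =>
    if k.val < d1 then A k
    else if k.val < d1 + d2 then B ⟨k.val - d1, lt_of_le_of_lt (Nat.sub_le _ _) k.isLt⟩
    else C ⟨k.val - d1 - d2, lt_of_le_of_lt (le_trans (Nat.sub_le _ _) (Nat.sub_le _ _)) k.isLt⟩

lemma net_ker {m : ℕ} (A B C : Matrix (Fin m) (Fin m) (ZMod 2))
    (h : IsNet 0 m 3 (digitalNet m 3 ![A, B, C])) (d1 d2 d3 : ℕ) (hd : d1 + d2 + d3 = m) :
    ∀ v, (stackM A B C d1 d2).mulVec v = 0 → v = 0 := by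
  classical
  intro v hv
  by_contra hv0
  -- truncated images vanish
  have hA : ∀ k : Fin m, k.val < d1 → A.mulVec v k = 0 := by
    intro k hk
    have := congrFun hv k
    simpa [stackM, mulVec, hk] using this
  have hB : ∀ k : Fin m, k.val < d2 → B.mulVec v k = 0 := by
    intro k hk
    have hlt : d1 + k.val < m := by omega
    have := congrFun hv ⟨d1 + k.val, hlt⟩
    simp only [stackM, mulVec, Matrix.of_apply, Pi.zero_apply] at this
    rw [if_neg (by omega), if_pos (by omega)] at this
    simpa [mulVec, Fin.eta] using this
  have hC : ∀ k : Fin m, k.val < d3 → C.mulVec v k = 0 := by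
    intro k hk
    have hlt : d1 + d2 + k.val < m := by omega
    have := congrFun hv ⟨d1 + d2 + k.val, hlt⟩
    simp only [stackM, mulVec, Matrix.of_apply, Pi.zero_apply] at this
    rw [if_neg (by omega), if_neg (by omega)] at this
    simpa [mulVec, Fin.eta, Nat.add_sub_cancel_left, Nat.sub_sub] using this
  -- arithmetic facts
  have hd1 : d1 ≤ m := by omega
  have hd2 : d2 ≤ m := by omega
  have hd3 : d3 ≤ m := by omega
  have hdle : ∀ i : Fin 3, (![d1,d2,d3]) i ≤ m := fun i => by
    match i with
    | 0 => exact hd1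
    | 1 => exact hd2
    | 2 => exact hd3
  have hMd : ∀ i : Fin 3, ∀ k : Fin m, k.val < (![d1,d2,d3]) i → (![A,B,C] i).mulVec v k = 0 :=
    fun i => by
    match i with
    | 0 => intro k hk; exact hA k (by simpa using hk)
    | 1 => intro k hk; exact hB k (by simpa using hk)
    | 2 => intro k hk; exact hC k (by simpa using hk)
  have hsum : (∑ i, (![d1,d2,d3]) i) = m - 0 := by simp [Fin.sum_univ_three]; omega
  obtain ⟨l2, hl2⟩ := digits_surj m v
  have hl2ne : l2.val ≠ 0 := by
    intro h0
    apply hv0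
    rw [← hl2, h0]
    funext k
    simp [digitsVec]
  have hsat : ∀ (l : ℕ), l < 2^m → (digitsVec m l = v ∨ digitsVec m l = 0) →
      ∀ i : Fin 3,
        (((0:ℕ):ℝ) / 2 ^ (![d1,d2,d3]) i ≤ phiMap m ((![A,B,C] i).mulVec (digitsVec m l)) ∧
         phiMap m ((![A,B,C] i).mulVec (digitsVec m l)) < (((0:ℕ):ℝ) + 1) / 2 ^ (![d1,d2,d3]) i) := by
    intro l hl hcases i
    constructor
    · simp only [Nat.cast_zero, zero_div]
      exact phi_nonneg _ _
    · simp only [Nat.cast_zero, zero_add]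
      apply phi_lt m ((![d1,d2,d3]) i) (hdle i)
      intro k hk
      rcases hcases with hc | hc <;> rw [hc]
      · exact hMd i k hk
      · simp [Matrix.mulVec_zero]
  have hcount := h ![d1,d2,d3] hsum (fun _ => 0) (fun i => by positivity)
  set p : (Fin 3 → ℝ) → Prop := fun x => ∀ i : Fin 3,
      (((0:ℕ):ℝ) / 2 ^ (![d1,d2,d3]) i ≤ x i ∧ x i < (((0:ℕ):ℝ) + 1) / 2 ^ (![d1,d2,d3]) i)
    with hp
  have hcount2 : 2 ≤ (digitalNet m 3 ![A,B,C]).countP p := by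
    rw [digitalNet, Multiset.countP_map]
    have hrfl : Multiset.filter (fun l => p (fun j => phiMap m ((![A,B,C] j).mulVec (digitsVec m l))))
        (Multiset.range (2^m)) = ((Finset.range (2^m)).filter
          (fun l => p (fun j => phiMap m ((![A,B,C] j).mulVec (digitsVec m l))))).val := rfl
    rw [hrfl]
    show 2 ≤ ((Finset.range (2^m)).filter _).card
    rw [Nat.succ_le_iff, Finset.one_lt_card]
    refine ⟨0, ?_, l2.val, ?_, ?_⟩
    · rw [Finset.mem_filter]
      refine ⟨Finset.mem_range.2 (by positivity), ?_⟩
      intro i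
      exact hsat 0 (by positivity) (Or.inr (by funext k; simp [digitsVec])) i
    · rw [Finset.mem_filter]
      exact ⟨Finset.mem_range.2 l2.isLt, fun i => hsat l2.val l2.isLt (Or.inl hl2) i⟩
    · exact fun hh => hl2ne hh.symm
  have hfin : (2:ℕ) ≤ 2^0 := le_of_le_of_eq hcount2 hcount
  norm_num at hfin

lemma stackM_row_lo {m : ℕ} (A B C : Matrix (Fin m) (Fin m) (ZMod 2)) (d1 d2 : ℕ)
    (k : Fin m) (h1 : k.val < d1) : stackM A B C d1 d2 k = A k := by
  funext j; simp [stackM, h1]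

lemma stackM_row_mid {m : ℕ} (A B C : Matrix (Fin m) (Fin m) (ZMod 2)) (d1 d2 : ℕ)
    (k : Fin m) (h1 : ¬ k.val < d1) (h2 : k.val < d1 + d2) :
    stackM A B C d1 d2 k = B ⟨k.val - d1, lt_of_le_of_lt (Nat.sub_le _ _) k.isLt⟩ := by
  funext j; simp [stackM, h1, h2]

lemma stackM_row_hi {m : ℕ} (A B C : Matrix (Fin m) (Fin m) (ZMod 2)) (d1 d2 : ℕ)
    (k : Fin m) (h1 : ¬ k.val < d1) (h2 : ¬ k.val < d1 + d2) :
    stackM A B C d1 d2 k =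
      C ⟨k.val - d1 - d2, lt_of_le_of_lt (le_trans (Nat.sub_le _ _) (Nat.sub_le _ _)) k.isLt⟩ := by
  funext j; simp [stackM, h1, h2]

lemma rowSet_zero {m : ℕ} (M : Matrix (Fin m) (Fin m) (ZMod 2)) : rowSet M 0 = ∅ := by
  ext x; simp [rowSet]

lemma rowSet_succ {m : ℕ} (M : Matrix (Fin m) (Fin m) (ZMod 2)) (n : ℕ) (hn : n < m) :
    rowSet M (n + 1) = insert (M ⟨n, hn⟩) (rowSet M n) := by
  ext x
  simp only [rowSet, Set.mem_setOf_eq, Set.mem_insert_iff]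
  constructor
  · rintro ⟨r, hr, rfl⟩
    rcases Nat.lt_succ_iff_lt_or_eq.1 hr with hr' | hr'
    · exact Or.inr ⟨r, hr', rfl⟩
    · exact Or.inl (congrArg M (Fin.ext hr'))
  · rintro (rfl | ⟨r, hr, rfl⟩)
    · exact ⟨⟨n, hn⟩, Nat.lt_succ_self n, rfl⟩
    · exact ⟨r, Nat.lt_succ_of_lt hr, rfl⟩

-- linear functional given by dot with v
lemma not_mem_span_of_dual {m : ℕ} (S : Set (Fin m → ZMod 2)) (x v : Fin m → ZMod 2)
    (hS : ∀ y ∈ S, dotProduct y v = 0) (hx : dotProduct x v = 1) :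
    x ∉ Submodule.span (ZMod 2) S := by
  intro hmem
  let φ : (Fin m → ZMod 2) →ₗ[ZMod 2] ZMod 2 :=
    { toFun := fun w => dotProduct w v
      map_add' := fun a b => by simp [add_dotProduct]
      map_smul' := fun c a => by simp [smul_dotProduct] }
  have hle : Submodule.span (ZMod 2) S ≤ LinearMap.ker φ := by
    rw [Submodule.span_le]
    intro y hy
    exact LinearMap.mem_ker.2 (hS y hy)
  have := hle hmem
  rw [LinearMap.mem_ker] at this
  simp only [φ, LinearMap.coe_mk, AddHom.coe_mk] at this
  rw [hx] at this
  exact one_ne_zero this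

-- rows of stackM are in the row sets when d1+d2+d3 = m
lemma stack_row_mem {m : ℕ} (A B C : Matrix (Fin m) (Fin m) (ZMod 2)) (d1 d2 d3 : ℕ)
    (hd : d1 + d2 + d3 = m) (k : Fin m) :
    stackM A B C d1 d2 k ∈ rowSet A d1 ∪ rowSet B d2 ∪ rowSet C d3 := by
  by_cases h1 : k.val < d1
  · exact Or.inl (Or.inl ⟨k, h1, (stackM_row_lo A B C d1 d2 k h1).symm ▸ rfl⟩)
  · by_cases h2 : k.val < d1 + d2
    · exact Or.inl (Or.inr ⟨⟨k.val - d1, lt_of_le_of_lt (Nat.sub_le _ _) k.isLt⟩,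
        by simp; omega, by rw [stackM_row_mid A B C d1 d2 k h1 h2]⟩)
    · exact Or.inr ⟨⟨k.val - d1 - d2, lt_of_le_of_lt (le_trans (Nat.sub_le _ _) (Nat.sub_le _ _)) k.isLt⟩,
        by simp; omega, by rw [stackM_row_hi A B C d1 d2 k h1 h2]⟩

lemma span_rows_top {m : ℕ} (A B C : Matrix (Fin m) (Fin m) (ZMod 2)) (d1 d2 d3 : ℕ)
    (hd : d1 + d2 + d3 = m) (hU : IsUnit (stackM A B C d1 d2).det) :
    Submodule.span (ZMod 2) (rowSet A d1 ∪ rowSet B d2 ∪ rowSet C d3) = ⊤ := by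
  rw [eq_top_iff]
  intro w _
  set M := stackM A B C d1 d2
  have hw : w = (w ᵥ* M⁻¹) ᵥ* M := by
    rw [Matrix.vecMul_vecMul, Matrix.nonsing_inv_mul M hU, Matrix.vecMul_one]
  rw [hw]
  have : (w ᵥ* M⁻¹) ᵥ* M = ∑ k, (w ᵥ* M⁻¹) k • M k := by
    funext j
    simp [Matrix.vecMul, dotProduct, Finset.sum_apply, Pi.smul_apply, mul_comm]
  rw [this]
  apply Submodule.sum_mem
  intro k _
  exact Submodule.smul_mem _ _ (Submodule.subset_span (stack_row_mem A B C d1 d2 d3 hd k))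

-- main non-membership lemma
lemma notMem_span_rows {m : ℕ} (A B C : Matrix (Fin m) (Fin m) (ZMod 2)) (d1 d2 d3 : ℕ)
    (hd : d1 + d2 + d3 = m) (hU : IsUnit (stackM A B C d1 d2).det)
    (p q r : ℕ) (hp : p ≤ d1) (hq : q ≤ d2) (hr : r ≤ d3) (k0 : Fin m)
    (hk0 : ¬ (k0.val < p ∨ (d1 ≤ k0.val ∧ k0.val < d1 + q) ∨
      (d1 + d2 ≤ k0.val ∧ k0.val < d1 + d2 + r))) :
    stackM A B C d1 d2 k0 ∉
      Submodule.span (ZMod 2) (rowSet A p ∪ rowSet B q ∪ rowSet C r) := by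
  set M := stackM A B C d1 d2
  set v : Fin m → ZMod 2 := M⁻¹ *ᵥ Pi.single k0 1 with hv
  have hMv : M *ᵥ v = Pi.single k0 1 := by
    rw [hv, Matrix.mulVec_mulVec, Matrix.mul_nonsing_inv M hU, Matrix.one_mulVec]
  have hdot : ∀ k : Fin m, dotProduct (M k) v = if k = k0 then 1 else 0 := by
    intro k
    have := congrFun hMv k
    rw [Pi.single_apply] at this
    exact this
  apply not_mem_span_of_dual _ _ v
  · intro y hy
    rcases hy with (⟨rr, hrr, hyE⟩ | ⟨rr, hrr, hyE⟩) | ⟨rr, hrr, hyE⟩ <;> subst hyE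
    · -- y = A rr, rr.val < p
      have hk : rr.val < d1 := lt_of_lt_of_le hrr hp
      rw [← stackM_row_lo A B C d1 d2 rr hk, hdot, if_neg]
      intro he; apply hk0; left
      rw [← he]; exact hrr
    · -- y = B rr, rr.val < q
      have hlt : d1 + rr.val < m := by omega
      have hM : M ⟨d1 + rr.val, hlt⟩ = B rr := by
        show stackM A B C d1 d2 ⟨d1 + rr.val, hlt⟩ = B rr
        rw [stackM_row_mid A B C d1 d2 ⟨d1 + rr.val, hlt⟩
          (by simp only [Fin.val_mk]; omega) (by simp only [Fin.val_mk]; omega)]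
        exact congrArg B (Fin.ext (by simp only [Fin.val_mk]; omega))
      rw [← hM, hdot, if_neg]
      intro he
      apply hk0
      have hke : k0.val = d1 + rr.val := by rw [← he]
      omega
    · -- y = C rr, rr.val < r
      have hlt : d1 + d2 + rr.val < m := by omega
      have hM : M ⟨d1 + d2 + rr.val, hlt⟩ = C rr := by
        show stackM A B C d1 d2 ⟨d1 + d2 + rr.val, hlt⟩ = C rr
        rw [stackM_row_hi A B C d1 d2 ⟨d1 + d2 + rr.val, hlt⟩
          (by simp only [Fin.val_mk]; omega) (by simp only [Fin.val_mk]; omega)]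
        exact congrArg C (Fin.ext (by simp only [Fin.val_mk]; omega))
      rw [← hM, hdot, if_neg]
      intro he
      apply hk0
      have hke : k0.val = d1 + d2 + rr.val := by rw [← he]
      omega
  · rw [hdot, if_pos rfl]


lemma zmod2_cases (r : ZMod 2) : r = 0 ∨ r = 1 := by revert r; decide

section
variable {V : Type*} [AddCommGroup V] [Module (ZMod 2) V]

lemma mem_sup_singleton {U : Submodule (ZMod 2) V} {y x : V}
    (hx : x ∈ (Submodule.span (ZMod 2) {y}) ⊔ U) :
    x ∈ U ∨ ∃ u ∈ U, x = y + u := by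
  rw [Submodule.mem_sup] at hx
  obtain ⟨z, hz, u, hu, rfl⟩ := hx
  rw [Submodule.mem_span_singleton] at hz
  obtain ⟨r, rfl⟩ := hz
  rcases zmod2_cases r with rfl | rfl
  · left; simpa using hu
  · right; exact ⟨u, hu, by rw [one_smul]⟩

lemma geom (U : Submodule (ZMod 2) V) (a b c : V)
    (htop : ∀ x : V, x ∈ (Submodule.span (ZMod 2) {a}) ⊔ ((Submodule.span (ZMod 2) {b}) ⊔ U))
    (ha : a ∉ (Submodule.span (ZMod 2) {b}) ⊔ U)
    (hca : c ∉ (Submodule.span (ZMod 2) {a}) ⊔ U)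
    (hcb : c ∉ (Submodule.span (ZMod 2) {b}) ⊔ U) :
    (Submodule.span (ZMod 2) {c}) ⊔ U =
      (Submodule.span (ZMod 2) {a + b}) ⊔
        (((Submodule.span (ZMod 2) {b}) ⊔ U) ⊓ ((Submodule.span (ZMod 2) {a}) ⊔ U)) := by
  classical
  have hmeet : ((Submodule.span (ZMod 2) {b}) ⊔ U) ⊓ ((Submodule.span (ZMod 2) {a}) ⊔ U) = U := by
    apply le_antisymm
    · intro x hx
      rw [Submodule.mem_inf] at hx
      obtain ⟨hxb, hxa⟩ := hx
      rcases mem_sup_singleton hxa with hx' | ⟨u, hu, rfl⟩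
      · exact hx'
      · exfalso
        apply ha
        have hu' : u ∈ (Submodule.span (ZMod 2) {b}) ⊔ U :=
          Submodule.mem_sup_right hu
        have hsub := Submodule.sub_mem _ hxb hu'
        simpa using hsub
    · exact le_inf le_sup_right le_sup_right
  -- c = a + b + u
  obtain ⟨u, hu, hc⟩ : ∃ u ∈ U, c = a + b + u := by
    rcases mem_sup_singleton (htop c) with hc' | ⟨w, hw, hcw⟩
    · exact absurd hc' hcb
    · rcases mem_sup_singleton hw with hw' | ⟨u, hu, rfl⟩
      · exfalso
        apply hca
        rw [hcw]
        exact Submodule.add_mem _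
          (Submodule.mem_sup_left (Submodule.mem_span_singleton_self a))
          (Submodule.mem_sup_right hw')
      · exact ⟨u, hu, by rw [hcw]; abel⟩
  rw [hmeet]
  apply le_antisymm
  · apply sup_le
    · rw [Submodule.span_singleton_le_iff_mem, hc]
      exact Submodule.add_mem _
        (Submodule.mem_sup_left (Submodule.mem_span_singleton_self (a+b)))
        (Submodule.mem_sup_right hu)
    · exact le_sup_right
  · apply sup_le
    · rw [Submodule.span_singleton_le_iff_mem]
      have hab : a + b = c - u := by rw [hc]; abel
      rw [hab]
      exact Submodule.sub_mem _
        (Submodule.mem_sup_left (Submodule.mem_span_singleton_self c))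
        (Submodule.mem_sup_right hu)
    · exact le_sup_right

end

lemma net_isUnit {m : ℕ} (A B C : Matrix (Fin m) (Fin m) (ZMod 2))
    (h : IsNet 0 m 3 (digitalNet m 3 ![A, B, C])) (d1 d2 d3 : ℕ) (hd : d1 + d2 + d3 = m) :
    IsUnit (stackM A B C d1 d2).det := by
  rw [isUnit_iff_ne_zero]
  intro hdet
  obtain ⟨v, hv0, hv⟩ := (Matrix.exists_mulVec_eq_zero_iff).2 hdet
  exact hv0 (net_ker A B C h d1 d2 d3 hd v hv)

lemma setIL {α : Type*} (x : α) (S T R : Set α) :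
    insert x S ∪ T ∪ R = insert x (S ∪ T ∪ R) := by
  simp [Set.insert_union]

lemma setIM {α : Type*} (x : α) (S T R : Set α) :
    S ∪ insert x T ∪ R = insert x (S ∪ T ∪ R) := by
  rw [Set.union_insert, Set.insert_union]

lemma setIR {α : Type*} (x : α) (S T R : Set α) :
    S ∪ T ∪ insert x R = insert x (S ∪ T ∪ R) := by
  rw [Set.union_insert]

lemma step_formula {m : ℕ} (A B C : Matrix (Fin m) (Fin m) (ZMod 2))
    (h : IsNet 0 m 3 (digitalNet m 3 ![A, B, C])) (i j : ℕ) (hm2 : i + j + 2 ≤ m) :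
    Vsub A B C i (j+1) =
      Submodule.span (ZMod 2) {A ⟨i, by omega⟩ + B ⟨m - i - j - 2, by omega⟩} ⊔
        (Vsub A B C i j ⊓ Vsub A B C (i+1) j) := by
  have hi : i < m := by omega
  have hn : m - i - j - 2 < m := by omega
  have hj : j < m := by omega
  -- abbreviations
  have eB : m - i - j - 1 = (m - i - j - 2) + 1 := by omega
  have eB' : m - (i+1) - j - 1 = m - i - j - 2 := by omega
  have eC : m - i - (j+1) - 1 = m - i - j - 2 := by omega
  -- span-forms of the three Vsub's
  have hVij : Vsub A B C i j =
      Submodule.span (ZMod 2) {B ⟨m - i - j - 2, hn⟩} ⊔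
        Submodule.span (ZMod 2) (rowSet A i ∪ rowSet B (m - i - j - 2) ∪ rowSet C j) := by
    rw [Vsub, eB, rowSet_succ B _ hn, setIM, Submodule.span_insert]
  have hVi1j : Vsub A B C (i+1) j =
      Submodule.span (ZMod 2) {A ⟨i, hi⟩} ⊔
        Submodule.span (ZMod 2) (rowSet A i ∪ rowSet B (m - i - j - 2) ∪ rowSet C j) := by
    rw [Vsub, eB', rowSet_succ A _ hi, setIL, Submodule.span_insert]
  have hVij1 : Vsub A B C i (j+1) =
      Submodule.span (ZMod 2) {C ⟨j, hj⟩} ⊔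
        Submodule.span (ZMod 2) (rowSet A i ∪ rowSet B (m - i - j - 2) ∪ rowSet C j) := by
    rw [Vsub, eC, rowSet_succ C _ hj, setIR, Submodule.span_insert]
  -- net facts
  have hU1 : IsUnit (stackM A B C (i+1) (m - i - j - 1)).det :=
    net_isUnit A B C h (i+1) (m - i - j - 1) j (by omega)
  have hU2 : IsUnit (stackM A B C i (m - i - j - 1)).det :=
    net_isUnit A B C h i (m - i - j - 1) (j+1) (by omega)
  have hU3 : IsUnit (stackM A B C (i+1) (m - i - j - 2)).det :=
    net_isUnit A B C h (i+1) (m - i - j - 2) (j+1) (by omega)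
  -- top
  have htopEq := span_rows_top A B C (i+1) (m - i - j - 1) j (by omega) hU1
  rw [rowSet_succ A _ hi, eB, rowSet_succ B _ hn, setIM, setIL, Set.insert_comm,
    Submodule.span_insert, Submodule.span_insert] at htopEq
  have htop : ∀ x : Fin m → ZMod 2,
      x ∈ Submodule.span (ZMod 2) {A ⟨i, hi⟩} ⊔
        (Submodule.span (ZMod 2) {B ⟨m - i - j - 2, hn⟩} ⊔
          Submodule.span (ZMod 2) (rowSet A i ∪ rowSet B (m - i - j - 2) ∪ rowSet C j)) := by
    intro x
    rw [htopEq]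
    exact Submodule.mem_top
  -- a ∉ span{b} ⊔ U = Vsub A B C i j
  have ha : A ⟨i, hi⟩ ∉ Submodule.span (ZMod 2) {B ⟨m - i - j - 2, hn⟩} ⊔
      Submodule.span (ZMod 2) (rowSet A i ∪ rowSet B (m - i - j - 2) ∪ rowSet C j) := by
    rw [← hVij, Vsub]
    have := notMem_span_rows A B C (i+1) (m - i - j - 1) j (by omega) hU1
      i (m - i - j - 1) j (by omega) le_rfl le_rfl ⟨i, hi⟩ (by simp only [Fin.val_mk]; omega)
    rwa [stackM_row_lo A B C _ _ _ (by simp only [Fin.val_mk]; omega)] at this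
  -- c ∉ span{a} ⊔ U = Vsub A B C (i+1) j
  have hm1 : m - 1 < m := by omega
  have hca : C ⟨j, hj⟩ ∉ Submodule.span (ZMod 2) {A ⟨i, hi⟩} ⊔
      Submodule.span (ZMod 2) (rowSet A i ∪ rowSet B (m - i - j - 2) ∪ rowSet C j) := by
    rw [← hVi1j, Vsub, eB']
    have := notMem_span_rows A B C (i+1) (m - i - j - 2) (j+1) (by omega) hU3
      (i+1) (m - i - j - 2) j le_rfl le_rfl (by omega) ⟨m-1, hm1⟩
      (by simp only [Fin.val_mk]; omega)
    rwa [stackM_row_hi A B C _ _ _ (by simp only [Fin.val_mk]; omega)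
      (by simp only [Fin.val_mk]; omega),
      show (⟨(⟨m-1, hm1⟩ : Fin m).val - (i+1) - (m - i - j - 2), _⟩ : Fin m) = ⟨j, hj⟩ from
        Fin.ext (by simp only [Fin.val_mk]; omega)] at this
  -- c ∉ span{b} ⊔ U = Vsub A B C i j
  have hcb : C ⟨j, hj⟩ ∉ Submodule.span (ZMod 2) {B ⟨m - i - j - 2, hn⟩} ⊔
      Submodule.span (ZMod 2) (rowSet A i ∪ rowSet B (m - i - j - 2) ∪ rowSet C j) := by
    rw [← hVij, Vsub]
    have := notMem_span_rows A B C i (m - i - j - 1) (j+1) (by omega) hU2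
      i (m - i - j - 1) j le_rfl le_rfl (by omega) ⟨m-1, hm1⟩
      (by simp only [Fin.val_mk]; omega)
    rwa [stackM_row_hi A B C _ _ _ (by simp only [Fin.val_mk]; omega)
      (by simp only [Fin.val_mk]; omega),
      show (⟨(⟨m-1, hm1⟩ : Fin m).val - i - (m - i - j - 1), _⟩ : Fin m) = ⟨j, hj⟩ from
        Fin.ext (by simp only [Fin.val_mk]; omega)] at this
  -- apply geom
  have hg := geom (Submodule.span (ZMod 2) (rowSet A i ∪ rowSet B (m - i - j - 2) ∪ rowSet C j))
    (A ⟨i, hi⟩) (B ⟨m - i - j - 2, hn⟩) (C ⟨j, hj⟩) htop ha hca hcb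
  rw [hVij1, hg, ← hVij, ← hVi1j]

theorem stmt18 (m : ℕ) (hm : 1 ≤ m) (A B C C' : Matrix (Fin m) (Fin m) (ZMod 2))
    (h : IsNet 0 m 3 (digitalNet m 3 ![A, B, C]))
    (h' : IsNet 0 m 3 (digitalNet m 3 ![A, B, C'])) :
    ∀ i j : ℕ, i + j ≤ m - 1 → Vsub A B C i j = Vsub A B C' i j := by
  suffices H : ∀ j i : ℕ, i + j ≤ m - 1 → Vsub A B C i j = Vsub A B C' i j by
    intro i j hij
    exact H j i hij
  intro j
  induction j with
  | zero =>
      intro i hij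
      unfold Vsub
      rw [rowSet_zero C, rowSet_zero C']
  | succ j IH =>
      intro i hij
      have hm2 : i + j + 2 ≤ m := by omega
      rw [step_formula A B C h i j hm2, step_formula A B C' h' i j hm2,
        IH i (by omega), IH (i+1) (by omega)]
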